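/- Let 𝔉 be a hereditary formation, G a finite group, and R/S an 𝔉-central normal section of G. Then for every subgroup E of G, the normal section (E ∩ R)/(E ∩ S) of E is 𝔉-central in E. -/

import Mathlib

/-- A class of finite groups. -/
def GroupClass : Type 1 :=
  ∀ (G : Type) [Group G] [Finite G], Prop

instance SemidirectProduct.instFinite {N G : Type*} [Group N] [Group G] [Finite N] [Finite G]
    (φ : G →* MulAut N) : Finite (N ⋊[φ] G) :=
  Finite.of_injective (fun x => (x.left, x.right)) (by
    rintro ⟨a, b⟩ ⟨c, d⟩ h
    simpa [Prod.ext_iff, SemidirectProduct.ext_iff] using h)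

/-- The `F`-residual of a finite group `G`. -/
def GroupClass.residual (F : GroupClass) (G : Type) [Group G] [Finite G] : Subgroup G :=
  sInf {N : Subgroup G | ∃ _ : N.Normal, F (G ⧸ N)}

/-- `F` is a formation. -/
structure GroupClass.IsFormation (F : GroupClass) : Prop where
  nonempty : ∃ (G : Type) (_ : Group G) (_ : Finite G), F G
  isoClosed : ∀ (G H : Type) [Group G] [Finite G] [Group H] [Finite H],
    (G ≃* H) → F G → F H
  quot_residual_mem : ∀ (G : Type) [Group G] [Finite G] (N : Subgroup G) (_ : N.Normal),
    F.residual G ≤ N → F (G ⧸ N)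

/-- `F` is hereditary (subgroup-closed). -/
def GroupClass.Hereditary (F : GroupClass) : Prop :=
  ∀ (G : Type) [Group G] [Finite G], F G → ∀ H : Subgroup G, F H

/-- `F` is saturated. -/
def GroupClass.Saturated (F : GroupClass) : Prop :=
  ∀ (G : Type) [Group G] [Finite G], F.residual G ≤ frattini G → F G

section SectionMachinery

variable {G : Type} [Group G]

/-- conjugation by `g` preserves `S.subgroupOf R` when `R, S` are normal. -/
theorem conj_map_subgroupOf (R S : Subgroup G) [hR : R.Normal] [hS : S.Normal] (g : G) :
    (S.subgroupOf R).map ((MulAut.conjNormal g : MulAut R) : R →* R) = S.subgroupOf R := by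
  ext x
  simp only [Subgroup.mem_map, Subgroup.mem_subgroupOf]
  constructor
  · rintro ⟨y, hy, rfl⟩
    simpa [MulAut.conjNormal_apply] using hS.conj_mem _ hy g
  · intro hx
    refine ⟨(MulAut.conjNormal g).symm x, ?_, by simp⟩
    simp only [Subgroup.mem_subgroupOf, MulAut.conjNormal_symm_apply]
    simpa using hS.conj_mem _ hx g⁻¹

/-- The conjugation action of `G` on the normal section `R/S`. -/
def secAction (R S : Subgroup G) [R.Normal] [S.Normal] :
    G →* MulAut (R ⧸ S.subgroupOf R) where
  toFun g := QuotientGroup.congr (S.subgroupOf R) (S.subgroupOf R)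
      (MulAut.conjNormal g) (conj_map_subgroupOf R S g)
  map_one' := by
    ext x
    induction x using QuotientGroup.induction_on with
    | H r => simp [QuotientGroup.congr_mk]
  map_mul' g₁ g₂ := by
    ext x
    induction x using QuotientGroup.induction_on with
    | H r => simp [QuotientGroup.congr_mk, map_mul]

/-- The centraliser in `G` of the normal section `R/S`. -/
def secCentralizer (R S : Subgroup G) [R.Normal] [S.Normal] : Subgroup G :=
  (secAction R S).ker

instance secCentralizer.normal (R S : Subgroup G) [R.Normal] [S.Normal] :
    (secCentralizer R S).Normal := MonoidHom.normal_ker _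

/-- The semidirect product `[R/S](G/K)` for a normal subgroup `K ≤ C_G(R/S)`. -/
abbrev secSDP (R S K : Subgroup G) [R.Normal] [S.Normal] [K.Normal]
    (hK : K ≤ secCentralizer R S) : Type :=
  (R ⧸ S.subgroupOf R) ⋊[QuotientGroup.lift K (secAction R S) (fun _ hx => hK hx)] (G ⧸ K)

end SectionMachinery

/-- The normal section `R/S` of `G` is `F`-central in `G`. -/
def FCentralSection (F : GroupClass) {G : Type} [Group G] [Finite G]
    (R S : Subgroup G) [R.Normal] [S.Normal] : Prop :=
  ∃ (K : Subgroup G) (hK : K.Normal),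
    haveI := hK
    ∃ hle : K ≤ secCentralizer R S, F (secSDP R S K hle)

/-- `H/K` is a chief factor of `G`. -/
def IsChiefFactor {G : Type} [Group G] (H K : Subgroup G) : Prop :=
  H.Normal ∧ K.Normal ∧ K < H ∧
    ∀ L : Subgroup G, L.Normal → K ≤ L → L ≤ H → L = K ∨ L = H

/-- A normal subgroup `N` of `G` is `F`-hypercentral in `G`:
every chief factor of `G` below `N` is `F`-central in `G`. -/
def FHypercentralIn (F : GroupClass) {G : Type} [Group G] [Finite G] (N : Subgroup G) : Prop :=
  N.Normal ∧ ∀ H K : Subgroup G, ∀ hcf : IsChiefFactor H K, H ≤ N →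
    @FCentralSection F G _ _ H K hcf.1 hcf.2.1

/-- The `F`-hypercentre of `G`: the product of all `F`-hypercentral normal subgroups. -/
def FHypercentre (F : GroupClass) (G : Type) [Group G] [Finite G] : Subgroup G :=
  ⨆ (N : Subgroup G) (_ : FHypercentralIn F N), N

/-- `A` is `K`-`F`-subnormal in `G`. -/
def KFSubnormalIn (F : GroupClass) {G : Type} [Group G] [Finite G] (A : Subgroup G) : Prop :=
  ∃ (n : ℕ) (c : ℕ → Subgroup G), c 0 = A ∧ c n = ⊤ ∧
    ∀ i < n, c i ≤ c (i + 1) ∧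
      (((c i).subgroupOf (c (i + 1))).Normal ∨
        F ((c (i + 1)) ⧸ ((c i).subgroupOf (c (i + 1))).normalCore))

/-- **Lemma 2(ii).** Let `𝔉` be a hereditary formation and `R/S` an `𝔉`-central
normal section of the finite group `G`. Then for every subgroup `E` of `G`, the
normal section `(E ∩ R)/(E ∩ S)` of `E` is `𝔉`-central in `E`. -/
theorem FCentralSection_subgroupOf
    (F : GroupClass) (hF : F.IsFormation) (hHer : F.Hereditary)
    {G : Type} [Group G] [Finite G]
    (R S : Subgroup G) [R.Normal] [S.Normal] (hSR : S ≤ R)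
    (hcent : FCentralSection F R S) (E : Subgroup G) :
    FCentralSection F (R.subgroupOf E) (S.subgroupOf E) := by
    classical
  obtain ⟨K, hKnorm, hle, hFD⟩ := hcent
  haveI := hKnorm
  haveI : (R.subgroupOf E).Normal := Subgroup.Normal.subgroupOf ‹R.Normal› E
  haveI : (S.subgroupOf E).Normal := Subgroup.Normal.subgroupOf ‹S.Normal› E
  refine ⟨K.subgroupOf E, Subgroup.Normal.subgroupOf hKnorm E, ?_, ?_⟩
  · -- K ∩ E centralizes (E ∩ R)/(E ∩ S)
    intro k hk
    have hk' : (k : G) ∈ K := hk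
    have h1 : secAction R S (k : G) = 1 := hle hk'
    show secAction (R.subgroupOf E) (S.subgroupOf E) k = 1
    ext x
    induction x using QuotientGroup.induction_on with
    | H r =>
      show QuotientGroup.mk (MulAut.conjNormal k r) = QuotientGroup.mk r
      rw [QuotientGroup.eq]
      have h2 := DFunLike.congr_fun h1
        (QuotientGroup.mk (⟨(r : G), r.2⟩ : R) : R ⧸ S.subgroupOf R)
      simp only [secAction, MonoidHom.coe_mk, OneHom.coe_mk,
        QuotientGroup.congr_mk, MulAut.one_apply] at h2
      rw [eq_comm, QuotientGroup.eq] at h2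
      have h3 : ((⟨(r : G), r.2⟩ : R) : G)⁻¹ *
          ((MulAut.conjNormal (k : G) (⟨(r : G), r.2⟩ : R)) : G) ∈ S := h2
      simp only [MulAut.conjNormal_apply] at h3
      simp only [Subgroup.mem_subgroupOf, Subgroup.coe_mul, Subgroup.coe_inv,
        MulAut.conjNormal_apply]
      simpa using S.inv_mem h3
  · -- the semidirect product for E lies in F
    set K' := K.subgroupOf E with hK'def
    haveI : K'.Normal := Subgroup.Normal.subgroupOf hKnorm E
    have hle' : K' ≤ secCentralizer (R.subgroupOf E) (S.subgroupOf E) := by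
      intro k hk
      have hk' : (k : G) ∈ K := hk
      have h1 : secAction R S (k : G) = 1 := hle hk'
      show secAction (R.subgroupOf E) (S.subgroupOf E) k = 1
      ext x
      induction x using QuotientGroup.induction_on with
      | H r =>
        show QuotientGroup.mk (MulAut.conjNormal k r) = QuotientGroup.mk r
        rw [QuotientGroup.eq]
        have h2 := DFunLike.congr_fun h1
          (QuotientGroup.mk (⟨(r : G), r.2⟩ : R) : R ⧸ S.subgroupOf R)
        simp only [secAction, MonoidHom.coe_mk, OneHom.coe_mk,
          QuotientGroup.congr_mk, MulAut.one_apply] at h2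
        rw [eq_comm, QuotientGroup.eq] at h2
        have h3 : ((⟨(r : G), r.2⟩ : R) : G)⁻¹ *
            ((MulAut.conjNormal (k : G) (⟨(r : G), r.2⟩ : R)) : G) ∈ S := h2
        simp only [MulAut.conjNormal_apply] at h3
        simp only [Subgroup.mem_subgroupOf, Subgroup.coe_mul, Subgroup.coe_inv,
          MulAut.conjNormal_apply]
        simpa [mul_assoc] using S.inv_mem h3
    -- inclusion of R ∩ E into R
    let ι : (R.subgroupOf E) →* R :=
      { toFun := fun r => ⟨(r : E), r.2⟩
        map_one' := rfl
        map_mul' := fun _ _ => rfl }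
    have hι : ∀ x : R.subgroupOf E,
        x ∈ (S.subgroupOf E).subgroupOf (R.subgroupOf E) →
        (QuotientGroup.mk' (S.subgroupOf R)).comp ι x = 1 := by
      intro x hx
      rw [MonoidHom.comp_apply, QuotientGroup.mk'_apply, QuotientGroup.eq_one_iff]
      exact hx
    let f₁ : ((R.subgroupOf E) ⧸ (S.subgroupOf E).subgroupOf (R.subgroupOf E)) →*
        (R ⧸ S.subgroupOf R) :=
      QuotientGroup.lift _ ((QuotientGroup.mk' (S.subgroupOf R)).comp ι) hι
    let f₂ : (E ⧸ K') →* (G ⧸ K) :=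
      QuotientGroup.map K' K E.subtype (fun x hx => hx)
    have hcompat : ∀ g : E ⧸ K',
        f₁.comp ((QuotientGroup.lift K' (secAction (R.subgroupOf E) (S.subgroupOf E))
            (fun _ hx => hle' hx)) g).toMonoidHom =
        ((QuotientGroup.lift K (secAction R S) (fun _ hx => hle hx))
            (f₂ g)).toMonoidHom.comp f₁ := by
      intro g
      induction g using QuotientGroup.induction_on with
      | H e =>
        refine DFunLike.ext _ _ fun x => ?_
        induction x using QuotientGroup.induction_on with
        | H r =>
          show f₁ (QuotientGroup.mk (MulAut.conjNormal e r)) =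
            QuotientGroup.mk (MulAut.conjNormal (e : G) (ι r))
          show QuotientGroup.mk (ι (MulAut.conjNormal e r)) =
            QuotientGroup.mk (MulAut.conjNormal (e : G) (ι r))
          congr 1
    let Φ := SemidirectProduct.map f₁ f₂ hcompat
    have hinj : Function.Injective Φ := by
      intro x y hxy
      have hl : f₁ x.left = f₁ y.left := congrArg SemidirectProduct.left hxy
      have hr : f₂ x.right = f₂ y.right := congrArg SemidirectProduct.right hxy
      have hf₁ : Function.Injective f₁ := by
        rw [injective_iff_map_eq_one]
        intro a ha
        induction a using QuotientGroup.induction_on with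
        | H r =>
          have : (QuotientGroup.mk' (S.subgroupOf R)) (ι r) = 1 := ha
          rw [QuotientGroup.mk'_apply, QuotientGroup.eq_one_iff] at this
          rw [QuotientGroup.eq_one_iff]
          exact this
      have hf₂ : Function.Injective f₂ := by
        rw [injective_iff_map_eq_one]
        intro a ha
        induction a using QuotientGroup.induction_on with
        | H e =>
          have : (QuotientGroup.mk ((e : G)) : G ⧸ K) = 1 := ha
          rw [QuotientGroup.eq_one_iff] at this
          rw [QuotientGroup.eq_one_iff]
          exact this
      exact SemidirectProduct.ext (hf₁ hl) (hf₂ hr)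
    have hrange : F Φ.range := hHer _ hFD Φ.range
    exact hF.isoClosed _ _ (MonoidHom.ofInjective hinj).symm hrange
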